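/- Let F be a finite field with q elements, let 2 ≤ t ≤ n, and suppose H is a t × n matrix over F with the property that for every injective map σ from {0,…,t−1} into {0,…,n−1}, the t × t submatrix of H formed by the columns σ(0),…,σ(t−1) is invertible. Then q ≥ n − t + 1. -/

import Mathlib

/-- If a `t × n` matrix over a finite field with `q` elements (with `2 ≤ t ≤ n`)
has every `t × t` submatrix formed by distinct columns invertible, then
`q ≥ n - t + 1`. -/
theorem field_size_lower_bound {F : Type*} [Field F] [Fintype F]
    (n t : ℕ) (ht : 2 ≤ t) (htn : t ≤ n) (H : Matrix (Fin t) (Fin n) F)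
    (hH : ∀ σ : Fin t → Fin n, Function.Injective σ →
      IsUnit ((Matrix.of fun i k : Fin t => H i (σ k)) :
        Matrix (Fin t) (Fin t) F)) :
    n - t + 1 ≤ Fintype.card F := by
  classical
  set A : Matrix (Fin t) (Fin t) F :=
    Matrix.of fun i k => H i (Fin.castLE htn k) with hAdef
  have hA : IsUnit A := hH (Fin.castLE htn) (Fin.castLE_injective htn)
  have hAdet : IsUnit A.det := (Matrix.isUnit_iff_isUnit_det A).1 hA
  have hAinv : IsUnit A⁻¹ :=
    ⟨⟨A⁻¹, A, Matrix.nonsing_inv_mul A hAdet, Matrix.mul_nonsing_inv A hAdet⟩, rfl⟩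
  set B : Matrix (Fin t) (Fin n) F := A⁻¹ * H with hBdef
  -- every t×t selection from B is invertible
  have hB : ∀ σ : Fin t → Fin n, Function.Injective σ →
      IsUnit ((Matrix.of fun i k : Fin t => B i (σ k)) :
        Matrix (Fin t) (Fin t) F) := by
    intro σ hσ
    have heq : (Matrix.of fun i k : Fin t => B i (σ k))
        = A⁻¹ * (Matrix.of fun i k : Fin t => H i (σ k)) := by
      ext i k
      simp [hBdef, Matrix.mul_apply]
    rw [heq]
    exact hAinv.mul (hH σ hσ)
  -- first t columns of B form the identity
  have hBid : ∀ i k : Fin t, B i (Fin.castLE htn k) = if i = k then 1 else 0 := by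
    intro i k
    have h1 : B i (Fin.castLE htn k) = (A⁻¹ * A) i k := by
      simp [hBdef, hAdef, Matrix.mul_apply]
    rw [h1, Matrix.nonsing_inv_mul A hAdet, Matrix.one_apply]
  -- the extra columns
  have hc : ∀ j : Fin (n - t), t + (j : ℕ) < n := fun j => by omega
  have hcval : ∀ j : Fin (n - t), ((⟨t + (j : ℕ), hc j⟩ : Fin n) : ℕ) = t + (j : ℕ) :=
    fun j => rfl
  set c : Fin (n - t) → Fin n := fun j => ⟨t + (j : ℕ), hc j⟩ with hcdef
  set v : Fin (n - t) → Fin t → F := fun j i => B i (c j) with hvdef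
  have hv : ∀ j i, v j i = B i (c j) := fun _ _ => rfl
  -- all entries of extra columns are nonzero
  have hvne : ∀ (j : Fin (n - t)) (r : Fin t), v j r ≠ 0 := by
    intro j r hzero
    set σ : Fin t → Fin n := fun k => if k = r then c j else Fin.castLE htn k with hσdef
    have hσval : ∀ k : Fin t, ((σ k : Fin n) : ℕ)
        = if k = r then t + (j : ℕ) else (k : ℕ) := by
      intro k
      by_cases hk : k = r
      · simp [hσdef, hk, hcdef]
      · simp [hσdef, hk]
    have hσinj : Function.Injective σ := by
      intro a b hab
      have h := congrArg Fin.val hab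
      rw [hσval a, hσval b] at h
      have hal := a.isLt
      have hbl := b.isLt
      split_ifs at h with h1 h2 h2
      · rw [h1, h2]
      · omega
      · omega
      · exact Fin.ext h
    have hunit := hB σ hσinj
    have hdet : ((Matrix.of fun i k : Fin t => B i (σ k)) :
        Matrix (Fin t) (Fin t) F).det = 0 := by
      apply Matrix.det_eq_zero_of_row_eq_zero r
      intro k
      by_cases hk : k = r
      · rw [Matrix.of_apply, hk]
        have : σ r = c j := by simp [hσdef]
        rw [this]
        exact hzero
      · have h1 : σ k = Fin.castLE htn k := by simp [hσdef, hk]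
        rw [Matrix.of_apply, h1, hBid r k, if_neg (Ne.symm hk)]
    rw [Matrix.isUnit_iff_isUnit_det, hdet, isUnit_zero_iff] at hunit
    exact one_ne_zero hunit.symm
  -- indices 0 and 1
  set i0 : Fin t := ⟨0, by omega⟩ with hi0def
  set i1 : Fin t := ⟨1, by omega⟩ with hi1def
  have hi01 : i0 ≠ i1 := by
    intro h
    exact absurd (congrArg Fin.val h) (by simp [hi0def, hi1def])
  set f : Fin (n - t) → Fˣ := fun j =>
    Units.mk0 (v j i0 * (v j i1)⁻¹)
      (mul_ne_zero (hvne j i0) (inv_ne_zero (hvne j i1))) with hfdef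
  have hfinj : Function.Injective f := by
    intro j1 j2 hf
    by_contra hne
    have h1 : v j1 i0 * (v j1 i1)⁻¹ = v j2 i0 * (v j2 i1)⁻¹ := by
      have := congrArg Units.val hf
      simpa [hfdef] using this
    rw [← div_eq_mul_inv, ← div_eq_mul_inv,
      div_eq_div_iff (hvne j1 i1) (hvne j2 i1)] at h1
    have hcross : v j1 i0 * v j2 i1 = v j2 i0 * v j1 i1 := h1
    -- build a singular submatrix
    set σ : Fin t → Fin n := fun k =>
      if k = i0 then c j1 else if k = i1 then c j2 else Fin.castLE htn k with hσdef
    have hσ0 : σ i0 = c j1 := by simp [hσdef]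
    have hσ1 : σ i1 = c j2 := by simp [hσdef, Ne.symm hi01]
    have hσo : ∀ k, k ≠ i0 → k ≠ i1 → σ k = Fin.castLE htn k := by
      intro k h0 h2; simp [hσdef, h0, h2]
    have hσval : ∀ k : Fin t, ((σ k : Fin n) : ℕ)
        = if k = i0 then t + (j1 : ℕ) else if k = i1 then t + (j2 : ℕ) else (k : ℕ) := by
      intro k
      by_cases hk0 : k = i0
      · simp [hσdef, hk0, Ne.symm hi01, hcdef]
      · by_cases hk1 : k = i1
        · simp [hσdef, hk0, hk1, hcdef, Ne.symm hi01]
        · simp [hσdef, hk0, hk1]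
    have hjne : (j1 : ℕ) ≠ (j2 : ℕ) := fun h => hne (Fin.ext h)
    have hσinj : Function.Injective σ := by
      intro a b hab
      have h := congrArg Fin.val hab
      rw [hσval a, hσval b] at h
      have hal := a.isLt
      have hbl := b.isLt
      split_ifs at h with h1 h2 h3 h4 h5 h6 h7 h8
      all_goals first
        | (rw [‹a = i0›, ‹b = i0›])
        | (rw [‹a = i1›, ‹b = i1›])
        | omega
        | exact Fin.ext h
    have hunit := hB σ hσinj
    set M : Matrix (Fin t) (Fin t) F :=
      Matrix.of fun i k : Fin t => B i (σ k) with hMdef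
    have hM : ∀ a k, M a k = B a (σ k) := fun _ _ => rfl
    -- kernel vector
    set x : Fin t → F := fun k =>
      if k = i0 then v j2 i1 else if k = i1 then -(v j1 i1)
      else -(v j2 i1 * v j1 k - v j1 i1 * v j2 k) with hxdef
    have hx0 : x i0 = v j2 i1 := by simp [hxdef]
    have hx1 : x i1 = -(v j1 i1) := by simp [hxdef, Ne.symm hi01]
    have hxo : ∀ k, k ≠ i0 → k ≠ i1 →
        x k = -(v j2 i1 * v j1 k - v j1 i1 * v j2 k) := by
      intro k h0 h2; simp [hxdef, h0, h2]
    have hxne : x ≠ 0 := by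
      intro h
      have h2 := congrFun h i1
      rw [hx1, Pi.zero_apply, neg_eq_zero] at h2
      exact hvne j1 i1 h2
    have hMx : M.mulVec x = 0 := by
      funext r
      have hterm : ∀ k : Fin t, M r k * x k =
          (if k = i0 then v j1 r * v j2 i1 else 0) +
          (if k = i1 then v j2 r * (-(v j1 i1)) else 0) +
          (if k = r then (if r = i0 ∨ r = i1 then 0 else x r) else 0) := by
        intro k
        rcases eq_or_ne k i0 with hk0 | hk0
        · have h3 : (if k = r then (if r = i0 ∨ r = i1 then 0 else x r) else 0) = (0:F) := by
            rcases eq_or_ne k r with h | h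
            · rw [if_pos h, if_pos (Or.inl (h ▸ hk0))]
            · rw [if_neg h]
          rw [h3, if_pos hk0, if_neg (by rw [hk0]; exact hi01), hk0, hM, hσ0, hx0,
            ← hv j1 r]
          ring
        · rcases eq_or_ne k i1 with hk1 | hk1
          · have h3 : (if k = r then (if r = i0 ∨ r = i1 then 0 else x r) else 0) = (0:F) := by
              rcases eq_or_ne k r with h | h
              · rw [if_pos h, if_pos (Or.inr (h ▸ hk1))]
              · rw [if_neg h]
            rw [h3, if_pos hk1, if_neg hk0, hk1, hM, hσ1, hx1, ← hv j2 r]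
            ring
          · have hMrk : M r k = if r = k then 1 else 0 := by
              rw [hM, hσo k hk0 hk1, hBid r k]
            rw [if_neg hk0, if_neg hk1, hMrk]
            rcases eq_or_ne k r with h | h
            · rw [if_pos h, if_pos h.symm, one_mul, h,
                if_neg (by rw [← h]; tauto : ¬(r = i0 ∨ r = i1))]
              ring
            · rw [if_neg h, if_neg (Ne.symm h), zero_mul]
              ring
      have hsum : (M.mulVec x) r = ∑ k, M r k * x k := by
        simp [Matrix.mulVec, dotProduct]
      rw [Pi.zero_apply, hsum]
      simp only [hterm, Finset.sum_add_distrib, Finset.sum_ite_eq',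
        Finset.mem_univ, if_true]
      rcases eq_or_ne r i0 with hr0 | hr0
      · rw [if_pos (Or.inl hr0), hr0]
        linear_combination hcross
      · rcases eq_or_ne r i1 with hr1 | hr1
        · rw [if_pos (Or.inr hr1), hr1]
          ring
        · rw [if_neg (by tauto : ¬(r = i0 ∨ r = i1)), hxo r hr0 hr1]
          ring
    have hdet0 : M.det = 0 := Matrix.exists_mulVec_eq_zero_iff.1 ⟨x, hxne, hMx⟩
    rw [Matrix.isUnit_iff_isUnit_det, hdet0, isUnit_zero_iff] at hunit
    exact one_ne_zero hunit.symm
  have hcard : n - t ≤ Fintype.card Fˣ := by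
    simpa using Fintype.card_le_of_injective f hfinj
  have hFpos : 1 ≤ Fintype.card F := Fintype.card_pos
  rw [Fintype.card_units] at hcard
  omega
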